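/- Suppose f is a continuously differentiable function on I and 0 < a < b. Then there exists δ > 0 such that for every g ∈ C(I) with ‖g − f‖ < δ (supremum norm), one has B(N̂(g,a), δ) ⊂ N̂(f,b) and B(Ň(g,a), δ) ⊂ Ň(f,b). -/

import Mathlib

open Filter Topology TopologicalSpace Set MeasureTheory

noncomputable section

/-- The unit interval `I = [0,1]` as a type. -/
abbrev UI : Type := ↥(Set.Icc (0:ℝ) 1)

/-- The space `𝒦` of closed subsets of `I`, with the (extended) Hausdorff metric topology. -/
abbrev KSp : Type := TopologicalSpace.Closeds UI

/-- The open `r`-neighbourhood of a set `A` within `I`. -/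
def nbhd (A : Set UI) (r : ℝ) : Set UI := ⋃ a ∈ A, Metric.ball a r

/-- Upper right Dini derivative `D⁺f(x)`, as an extended real. -/
def DiniSupR (f : UI → ℝ) (x : UI) : EReal :=
  Filter.limsup (fun y : UI => (((f y - f x) / ((y : ℝ) - (x : ℝ))) : EReal)) (𝓝[>] x)

/-- Lower right Dini derivative `D₊f(x)`. -/
def DiniInfR (f : UI → ℝ) (x : UI) : EReal :=
  Filter.liminf (fun y : UI => (((f y - f x) / ((y : ℝ) - (x : ℝ))) : EReal)) (𝓝[>] x)

/-- Upper left Dini derivative `D⁻f(x)`. -/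
def DiniSupL (f : UI → ℝ) (x : UI) : EReal :=
  Filter.limsup (fun y : UI => (((f y - f x) / ((y : ℝ) - (x : ℝ))) : EReal)) (𝓝[<] x)

/-- Lower left Dini derivative `D₋f(x)`. -/
def DiniInfL (f : UI → ℝ) (x : UI) : EReal :=
  Filter.liminf (fun y : UI => (((f y - f x) / ((y : ℝ) - (x : ℝ))) : EReal)) (𝓝[<] x)

/-- `x` is a knot point of `f`. -/
def IsKnotPoint (f : UI → ℝ) (x : UI) : Prop :=
  (0 < (x:ℝ) ∧ (x:ℝ) < 1 ∧ DiniSupR f x = ⊤ ∧ DiniSupL f x = ⊤ ∧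
      DiniInfR f x = ⊥ ∧ DiniInfL f x = ⊥) ∨
  ((x:ℝ) = 0 ∧ DiniSupR f x = ⊤ ∧ DiniInfR f x = ⊥) ∨
  ((x:ℝ) = 1 ∧ DiniSupL f x = ⊤ ∧ DiniInfL f x = ⊥)

/-- `N(f)`: the set of points of `I` that are not knot points of `f`. -/
def NonKnot (f : UI → ℝ) : Set UI := {x | ¬ IsKnotPoint f x}

/-- `S` is an `Fσ` subset of `I`. -/
def IsFsigma (S : Set UI) : Prop :=
  ∃ F : ℕ → Set UI, (∀ n, IsClosed (F n)) ∧ S = ⋃ n, F n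

/-- `N⁺(f,a)`. -/
def NplusUp (f : UI → ℝ) (a : ℝ) : Set UI :=
  {x | (x:ℝ) ≤ 1 - 2^(-a) ∧
    ∀ y : UI, (x:ℝ) ≤ (y:ℝ) → (y:ℝ) ≤ (x:ℝ) + 2^(-a) →
      f y - f x ≤ a * ((y:ℝ) - (x:ℝ))}

/-- `N₊(f,a)`. -/
def NplusLow (f : UI → ℝ) (a : ℝ) : Set UI :=
  {x | (x:ℝ) ≤ 1 - 2^(-a) ∧
    ∀ y : UI, (x:ℝ) ≤ (y:ℝ) → (y:ℝ) ≤ (x:ℝ) + 2^(-a) →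
      -a * ((y:ℝ) - (x:ℝ)) ≤ f y - f x}

/-- `N⁻(f,a)`. -/
def NminusUp (f : UI → ℝ) (a : ℝ) : Set UI :=
  {x | 2^(-a) ≤ (x:ℝ) ∧
    ∀ y : UI, (x:ℝ) - 2^(-a) ≤ (y:ℝ) → (y:ℝ) ≤ (x:ℝ) →
      a * ((y:ℝ) - (x:ℝ)) ≤ f y - f x}

/-- `N₋(f,a)`. -/
def NminusLow (f : UI → ℝ) (a : ℝ) : Set UI :=
  {x | 2^(-a) ≤ (x:ℝ) ∧
    ∀ y : UI, (x:ℝ) - 2^(-a) ≤ (y:ℝ) → (y:ℝ) ≤ (x:ℝ) →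
      f y - f x ≤ -a * ((y:ℝ) - (x:ℝ))}

/-- `N̂(f,a) = N⁺(f,a) ∪ N₋(f,a)`. -/
def Nhat (f : UI → ℝ) (a : ℝ) : Set UI := NplusUp f a ∪ NminusLow f a

/-- `Ň(f,a) = N₊(f,a) ∪ N⁻(f,a)`. -/
def Ncheck (f : UI → ℝ) (a : ℝ) : Set UI := NplusLow f a ∪ NminusUp f a

/-- `N(f,a)`. -/
def NN (f : UI → ℝ) (a : ℝ) : Set UI := Nhat f a ∪ Ncheck f a

/-- `f : I → ℝ` is continuously differentiable on `I`. -/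
def IsC1 (f : UI → ℝ) : Prop :=
  ContDiffOn ℝ 1 (Set.IccExtend (zero_le_one : (0:ℝ) ≤ 1) f) (Set.Icc (0:ℝ) 1)

/-- `φ` is a bump function of height `h` and width `w` located at `H1` and `H2`. -/
def IsBump (φ : C(UI, ℝ)) (h w : ℝ) (H1 H2 : Set UI) : Prop :=
  IsC1 ⇑φ ∧ ‖φ‖ = h ∧ (∀ x ∈ H1, φ x = h) ∧ (∀ x ∈ H2, φ x = -h) ∧
  {x : UI | 0 < φ x} ⊆ nbhd H1 w ∧ {x : UI | φ x < 0} ⊆ nbhd H2 w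

/-- The shifted sequence `n^k`. -/
def shiftSeq (n : ℕ → ℕ) (k : ℕ) : ℕ → ℕ := fun j => n (j + k)

/-- The index set `A_j^m(n) = [n_j] ∪ ⋃_{i=j}^{m-1} {n_i+1, …, n_i+j-1}`. -/
def Aset (n : ℕ → ℕ) (j m : ℕ) : Set ℕ :=
  Set.Icc 1 (n j) ∪ ⋃ i ∈ Set.Ico j m, Set.Icc (n i + 1) (n i + (j - 1))

/-- `n ∈ Z`: sequence of positive integers with `n_{j+1} ≥ n_j + j`. -/
def memZ (n : ℕ → ℕ) : Prop := ∀ j, 1 ≤ j → 1 ≤ n j ∧ n j + j ≤ n (j + 1)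

/-- `δ ∈ Y`: strictly decreasing sequence in `(0,1)` tending to `0`. -/
def memY (δ : ℕ → ℝ) : Prop :=
  (∀ j, 1 ≤ j → 0 < δ j ∧ δ j < 1) ∧ (∀ j, 1 ≤ j → δ (j + 1) < δ j) ∧
    Filter.Tendsto δ Filter.atTop (𝓝 0)

/-- `a ∈ X`: strictly increasing sequence of positive reals tending to `∞`. -/
def memX (a : ℕ → ℝ) : Prop :=
  (∀ j, 1 ≤ j → 0 < a j) ∧ (∀ j, 1 ≤ j → a j < a (j + 1)) ∧
    Filter.Tendsto a Filter.atTop Filter.atTop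

/-- `K ∈ 𝒮_k(n,δ)`. -/
def memS (K : ℕ → KSp) (n : ℕ → ℕ) (δ : ℕ → ℝ) (k : ℕ) : Prop :=
  ∀ j m, 2 ≤ j → j + 1 ≤ m →
    (⋃ i ∈ Aset (shiftSeq n k) j m \ Aset (shiftSeq n k) j (m - 1), (K i : Set UI))
      ⊆ ⋃ i ∈ Aset (shiftSeq n k) (j - 1) (m - 1), nbhd (K i : Set UI) (δ m)

/-- `(K, f, n, δ, a, b) ∈ 𝒴_k`. -/
def memYk (K : ℕ → KSp) (f : C(UI, ℝ)) (n : ℕ → ℕ) (δ : ℕ → ℝ) (a b : ℕ → ℝ)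
    (k : ℕ) : Prop :=
  memZ n ∧ memY δ ∧ memX a ∧ memX b ∧ memS K n δ k ∧
  ∀ j m, 1 ≤ j → j ≤ m →
    NN ⇑f (a j) ⊆ (⋃ i ∈ Aset (shiftSeq n k) j m, nbhd (K i : Set UI) (δ m)) ∧
    (⋃ i ∈ Aset n j m, (K i : Set UI)) ⊆ nbhd (NN ⇑f (b j)) (δ m)

/-- `(K, f) ∈ 𝒳`: the projection of `𝒴 = ⋃_k 𝒴_k` to `𝒦^ℕ × C(I)`. -/
def memXcal (K : ℕ → KSp) (f : C(UI, ℝ)) : Prop :=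
  ∃ n δ a b k, memYk K f n δ a b k

lemma slope_le_aux {F φ : ℝ → ℝ} {c s t : ℝ}
    (hF : ContinuousOn F (Set.Icc s t))
    (hd : ∀ u ∈ Set.Ioo s t, HasDerivAt F (φ u) u)
    (hc : ∀ u ∈ Set.Ioo s t, φ u ≤ c) (hst : s ≤ t) :
    F t - F s ≤ c * (t - s) := by
  have hder : ∀ u ∈ Set.Ioo s t, HasDerivAt (fun v => c * v - F v) (c * 1 - φ u) u := by
    intro u hu
    exact ((hasDerivAt_id u).const_mul c).sub (hd u hu)
  have hmono : MonotoneOn (fun v => c * v - F v) (Set.Icc s t) := by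
    apply monotoneOn_of_deriv_nonneg (convex_Icc s t)
    · exact (continuousOn_const.mul continuousOn_id).sub hF
    · intro u hu
      rw [interior_Icc] at hu
      exact (hder u hu).differentiableAt.differentiableWithinAt
    · intro u hu
      rw [interior_Icc] at hu
      rw [(hder u hu).deriv]
      have := hc u hu
      linarith
  have h2 := hmono (Set.left_mem_Icc.2 hst) (Set.right_mem_Icc.2 hst) hst
  simp only at h2
  linarith

lemma slope_ge_aux {F φ : ℝ → ℝ} {c s t : ℝ}
    (hF : ContinuousOn F (Set.Icc s t))
    (hd : ∀ u ∈ Set.Ioo s t, HasDerivAt F (φ u) u)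
    (hc : ∀ u ∈ Set.Ioo s t, c ≤ φ u) (hst : s ≤ t) :
    c * (t - s) ≤ F t - F s := by
  have := slope_le_aux (F := fun v => -F v) (φ := fun v => -φ v) (c := -c)
    hF.neg (fun u hu => (hd u hu).neg) (fun u hu => neg_le_neg (hc u hu)) hst
  simp only [neg_sub_neg] at this
  linarith

lemma abs_sub_le_aux {F φ : ℝ → ℝ} {M s t : ℝ}
    (hF : ContinuousOn F (Set.Icc s t))
    (hd : ∀ u ∈ Set.Ioo s t, HasDerivAt F (φ u) u)
    (hM : ∀ u ∈ Set.Ioo s t, |φ u| ≤ M) (hst : s ≤ t) :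
    |F t - F s| ≤ M * (t - s) := by
  rw [abs_le]
  constructor
  · have := slope_ge_aux hF hd (fun u hu => neg_le_of_abs_le (hM u hu)) hst
    linarith
  · exact slope_le_aux hF hd (fun u hu => le_of_abs_le (hM u hu)) hst

lemma C1_deriv_setup (f : C(UI, ℝ)) (hf : IsC1 ⇑f) :
    ∃ φ : ℝ → ℝ, ContinuousOn φ (Set.Icc 0 1) ∧
      ∀ u ∈ Set.Ioo (0:ℝ) 1, HasDerivAt (Set.IccExtend zero_le_one ⇑f) (φ u) u := by
  refine ⟨derivWithin (Set.IccExtend zero_le_one ⇑f) (Set.Icc 0 1),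
    hf.continuousOn_derivWithin (uniqueDiffOn_Icc zero_lt_one) le_rfl, ?_⟩
  intro u hu
  have hmem : Set.Icc (0:ℝ) 1 ∈ 𝓝 u := Icc_mem_nhds hu.1 hu.2
  have hdiff : DifferentiableAt ℝ (Set.IccExtend zero_le_one ⇑f) u :=
    ((hf.differentiableOn one_ne_zero) u (Set.mem_Icc_of_Ioo hu)).differentiableAt hmem
  rw [derivWithin_of_mem_nhds hmem]
  exact hdiff.hasDerivAt

set_option maxHeartbeats 1000000 in
lemma key_right (f : C(UI, ℝ)) (hf : IsC1 ⇑f) {a b : ℝ} (ha : 0 < a) (hab : a < b) :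
    ∃ δ > 0, ∀ g : C(UI, ℝ), ‖g - f‖ < δ →
      nbhd (NplusUp ⇑g a) δ ⊆ NplusUp ⇑f b := by
  classical
  obtain ⟨φ, hφc, hφd⟩ := C1_deriv_setup f hf
  have hFc : ContinuousOn (Set.IccExtend zero_le_one ⇑f) (Set.Icc 0 1) := hf.continuousOn
  set F : ℝ → ℝ := Set.IccExtend zero_le_one ⇑f with hFdef
  obtain ⟨M, hM⟩ := isCompact_Icc.exists_bound_of_continuousOn hφc
  have hM0 : 0 ≤ M := le_trans (abs_nonneg _) (hM 0 (by norm_num))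
  set e : ℝ := (b - a) / 2 with he_def
  have he : 0 < e := by simp only [he_def]; linarith
  have hb_eq : b = a + 2 * e := by simp only [he_def]; ring
  obtain ⟨r, hr0, hr⟩ := Metric.uniformContinuousOn_iff.1
      (isCompact_Icc.uniformContinuousOn_of_continuous hφc) (e/4) (by positivity)
  have h2a : (0:ℝ) < 2 ^ (-a) := Real.rpow_pos_of_pos two_pos _
  have h2b : (0:ℝ) < 2 ^ (-b) := Real.rpow_pos_of_pos two_pos _
  have h2a1 : (2:ℝ) ^ (-a) < 1 := Real.rpow_lt_one_of_one_lt_of_neg one_lt_two (by linarith)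
  have h2ba : (2:ℝ) ^ (-b) < 2 ^ (-a) :=
    (Real.rpow_lt_rpow_left_iff one_lt_two).2 (by linarith)
  set ρ : ℝ := min r (2 ^ (-a)) with hρ_def
  have hρ0 : 0 < ρ := lt_min hr0 h2a
  have hρr : ρ ≤ r := min_le_left _ _
  have hρ2a : ρ ≤ 2 ^ (-a) := min_le_right _ _
  set δ : ℝ := min (min (e * ρ / 8) ((2 ^ (-a) - 2 ^ (-b)) / 2))
      (min (r / 2) (e * r / (a + M + 3))) with hδ_def
  have hδ0 : 0 < δ := by
    refine lt_min (lt_min (by positivity) (by linarith)) (lt_min (by positivity) (by positivity))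
  have hδ1 : δ ≤ e * ρ / 8 := le_trans (min_le_left _ _) (min_le_left _ _)
  have hδ2 : δ ≤ (2 ^ (-a) - 2 ^ (-b)) / 2 := le_trans (min_le_left _ _) (min_le_right _ _)
  have hδ3 : δ ≤ r / 2 := le_trans (min_le_right _ _) (min_le_left _ _)
  have hδ4 : δ * (a + M + 3) ≤ e * r := by
    have h4 : δ ≤ e * r / (a + M + 3) := le_trans (min_le_right _ _) (min_le_right _ _)
    rw [← le_div_iff₀ (by positivity)]
    exact h4
  refine ⟨δ, hδ0, ?_⟩
  intro g hg x' hx'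
  rw [nbhd, Set.mem_iUnion₂] at hx'
  obtain ⟨x, hxA, hx'ball⟩ := hx'
  have hxx' : |(x':ℝ) - (x:ℝ)| < δ := by
    have := Metric.mem_ball.1 hx'ball
    rwa [Subtype.dist_eq, Real.dist_eq] at this
  obtain ⟨hxx'1, hxx'2⟩ := abs_lt.1 hxx'
  obtain ⟨hx1, hx2⟩ := hxA
  have hfg : ∀ t : UI, |g t - f t| < δ := by
    intro t
    calc |g t - f t| = ‖(g - f) t‖ := by simp [Real.norm_eq_abs]
    _ ≤ ‖g - f‖ := ContinuousMap.norm_coe_le_norm _ t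
    _ < δ := hg
  have hx0 : (0:ℝ) ≤ x := x.2.1
  have hxle1 : (x:ℝ) ≤ 1 := x.2.2
  have hx'0 : (0:ℝ) ≤ x' := x'.2.1
  have hx'le1 : (x':ℝ) ≤ 1 := x'.2.2
  have hfB : ∀ y : UI, (x:ℝ) ≤ y → (y:ℝ) ≤ (x:ℝ) + 2 ^ (-a) →
      f y - f x ≤ a * ((y:ℝ) - x) + 2 * δ := by
    intro y h1 h2
    have h3 := hx2 y h1 h2
    have h4 := abs_lt.1 (hfg y)
    have h5 := abs_lt.1 (hfg x)
    linarith
  have hFval : ∀ t : UI, F (t:ℝ) = f t := fun t => Set.IccExtend_val zero_le_one ⇑f t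
  -- Step 1: φ x ≤ a + e/2
  have hxρ_mem : (x:ℝ) + ρ ∈ Set.Icc (0:ℝ) 1 := ⟨by linarith, by linarith⟩
  have hstep1 : φ (x:ℝ) ≤ a + e / 2 := by
    have hsub : Set.Icc (x:ℝ) ((x:ℝ) + ρ) ⊆ Set.Icc 0 1 :=
      Set.Icc_subset_Icc hx0 hxρ_mem.2
    have hlow : (φ (x:ℝ) - e/4) * (((x:ℝ) + ρ) - (x:ℝ)) ≤ F ((x:ℝ) + ρ) - F (x:ℝ) := by
      apply slope_ge_aux (hFc.mono hsub)
        (fun u hu => hφd u ⟨lt_of_le_of_lt hx0 hu.1, lt_of_lt_of_le hu.2 hxρ_mem.2⟩)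
        ?_ (by linarith)
      intro u hu
      have hu1 : u ∈ Set.Icc (0:ℝ) 1 := hsub (Set.mem_Icc_of_Ioo hu)
      have hd := hr u hu1 (x:ℝ) x.2 (by
        rw [Real.dist_eq, abs_lt]
        constructor <;> [linarith [hu.1, hu.2]; linarith [hu.1, hu.2]])
      rw [Real.dist_eq] at hd
      have := abs_lt.1 hd
      linarith
    set y0 : UI := ⟨(x:ℝ) + ρ, hxρ_mem⟩ with hy0
    have hup := hfB y0 (by simp only [hy0]; linarith) (by simp only [hy0]; linarith)
    have hF1 : F ((x:ℝ) + ρ) = f y0 := hFval y0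
    have hF2 : F (x:ℝ) = f x := hFval x
    have hy0v : (y0:ℝ) = (x:ℝ) + ρ := rfl
    rw [hy0v] at hup
    rw [hF1, hF2] at hlow
    nlinarith [hρ0, hδ1]
  have hφ_near : ∀ u ∈ Set.Icc (0:ℝ) 1, |u - (x:ℝ)| < r → φ u ≤ a + e := by
    intro u hu hur
    have hd := hr u hu (x:ℝ) x.2 (by rwa [Real.dist_eq])
    rw [Real.dist_eq] at hd
    have := abs_lt.1 hd
    linarith
  -- prove x' ∈ NplusUp f b
  refine ⟨by linarith, ?_⟩
  intro y hy1 hy2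
  have hy0 : (0:ℝ) ≤ y := y.2.1
  have hyle1 : (y:ℝ) ≤ 1 := y.2.2
  have hyx2a : (y:ℝ) ≤ (x:ℝ) + 2 ^ (-a) := by linarith
  by_cases hcase : (y:ℝ) ≤ (x:ℝ) + r
  · -- slope argument on [x', y]
    have hsub : Set.Icc (x':ℝ) (y:ℝ) ⊆ Set.Icc 0 1 := Set.Icc_subset_Icc hx'0 hyle1
    have hkey : F (y:ℝ) - F (x':ℝ) ≤ (a + e) * ((y:ℝ) - (x':ℝ)) := by
      apply slope_le_aux (hFc.mono hsub)
        (fun u hu => hφd u ⟨lt_of_le_of_lt hx'0 hu.1, lt_of_lt_of_le hu.2 hyle1⟩)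
        ?_ hy1
      intro u hu
      apply hφ_near u (hsub (Set.mem_Icc_of_Ioo hu))
      rw [abs_lt]
      constructor
      · linarith [hu.1, hδ3]
      · linarith [hu.2]
    rw [hFval y, hFval x'] at hkey
    have h8 : b * ((y:ℝ) - (x':ℝ)) = (a + e) * ((y:ℝ) - (x':ℝ)) + e * ((y:ℝ) - (x':ℝ)) := by
      rw [hb_eq]; ring
    have h9 : 0 ≤ e * ((y:ℝ) - (x':ℝ)) := mul_nonneg he.le (by linarith)
    linarith [hkey, h8, h9]
  · push_neg at hcase
    have hyx0 : (x:ℝ) ≤ y := by linarith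
    have h1 := hfB y hyx0 hyx2a
    have hlip : |F (x:ℝ) - F (x':ℝ)| ≤ M * δ := by
      rcases le_total (x':ℝ) (x:ℝ) with h | h
      · have := abs_sub_le_aux (hFc.mono (Set.Icc_subset_Icc hx'0 hxle1))
          (fun u hu => hφd u ⟨lt_of_le_of_lt hx'0 hu.1, lt_of_lt_of_le hu.2 hxle1⟩)
          (fun u hu => hM u (Set.Icc_subset_Icc hx'0 hxle1 (Set.mem_Icc_of_Ioo hu))) h
        calc |F (x:ℝ) - F (x':ℝ)| ≤ M * ((x:ℝ) - (x':ℝ)) := this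
        _ ≤ M * δ := mul_le_mul_of_nonneg_left (by linarith) hM0
      · have := abs_sub_le_aux (hFc.mono (Set.Icc_subset_Icc hx0 hx'le1))
          (fun u hu => hφd u ⟨lt_of_le_of_lt hx0 hu.1, lt_of_lt_of_le hu.2 hx'le1⟩)
          (fun u hu => hM u (Set.Icc_subset_Icc hx0 hx'le1 (Set.mem_Icc_of_Ioo hu))) h
        rw [abs_sub_comm]
        calc |F (x':ℝ) - F (x:ℝ)| ≤ M * ((x':ℝ) - (x:ℝ)) := this
        _ ≤ M * δ := mul_le_mul_of_nonneg_left (by linarith) hM0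
    rw [hFval x, hFval x'] at hlip
    have hlip' := abs_le.1 hlip
    have hyx' : r / 2 ≤ (y:ℝ) - (x':ℝ) := by linarith
    have her : e * r ≤ 2 * e * ((y:ℝ) - (x':ℝ)) := by nlinarith [mul_le_mul_of_nonneg_left hyx' he.le]
    have h7 : a * ((y:ℝ) - (x:ℝ)) ≤ a * ((y:ℝ) - (x':ℝ)) + a * δ := by
      nlinarith [mul_le_mul_of_nonneg_left hxx'2.le ha.le]
    have h8 : b * ((y:ℝ) - (x':ℝ)) = a * ((y:ℝ) - (x':ℝ)) + 2 * e * ((y:ℝ) - (x':ℝ)) := by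
      rw [hb_eq]; ring
    linarith [h1, hlip'.1, hlip'.2, h7, her, hδ4, h8, hδ0]


set_option maxHeartbeats 1000000 in
lemma key_left (f : C(UI, ℝ)) (hf : IsC1 ⇑f) {a b : ℝ} (ha : 0 < a) (hab : a < b) :
    ∃ δ > 0, ∀ g : C(UI, ℝ), ‖g - f‖ < δ →
      nbhd (NminusUp ⇑g a) δ ⊆ NminusUp ⇑f b := by
  classical
  obtain ⟨φ, hφc, hφd⟩ := C1_deriv_setup f hf
  have hFc : ContinuousOn (Set.IccExtend zero_le_one ⇑f) (Set.Icc 0 1) := hf.continuousOn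
  set F : ℝ → ℝ := Set.IccExtend zero_le_one ⇑f with hFdef
  obtain ⟨M, hM⟩ := isCompact_Icc.exists_bound_of_continuousOn hφc
  have hM0 : 0 ≤ M := le_trans (abs_nonneg _) (hM 0 (by norm_num))
  set e : ℝ := (b - a) / 2 with he_def
  have he : 0 < e := by simp only [he_def]; linarith
  have hb_eq : b = a + 2 * e := by simp only [he_def]; ring
  obtain ⟨r, hr0, hr⟩ := Metric.uniformContinuousOn_iff.1
      (isCompact_Icc.uniformContinuousOn_of_continuous hφc) (e/4) (by positivity)
  have h2a : (0:ℝ) < 2 ^ (-a) := Real.rpow_pos_of_pos two_pos _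
  have h2b : (0:ℝ) < 2 ^ (-b) := Real.rpow_pos_of_pos two_pos _
  have h2a1 : (2:ℝ) ^ (-a) < 1 := Real.rpow_lt_one_of_one_lt_of_neg one_lt_two (by linarith)
  have h2ba : (2:ℝ) ^ (-b) < 2 ^ (-a) :=
    (Real.rpow_lt_rpow_left_iff one_lt_two).2 (by linarith)
  set ρ : ℝ := min r (2 ^ (-a)) with hρ_def
  have hρ0 : 0 < ρ := lt_min hr0 h2a
  have hρr : ρ ≤ r := min_le_left _ _
  have hρ2a : ρ ≤ 2 ^ (-a) := min_le_right _ _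
  set δ : ℝ := min (min (e * ρ / 8) ((2 ^ (-a) - 2 ^ (-b)) / 2))
      (min (r / 2) (e * r / (a + M + 3))) with hδ_def
  have hδ0 : 0 < δ := by
    refine lt_min (lt_min (by positivity) (by linarith)) (lt_min (by positivity) (by positivity))
  have hδ1 : δ ≤ e * ρ / 8 := le_trans (min_le_left _ _) (min_le_left _ _)
  have hδ2 : δ ≤ (2 ^ (-a) - 2 ^ (-b)) / 2 := le_trans (min_le_left _ _) (min_le_right _ _)
  have hδ3 : δ ≤ r / 2 := le_trans (min_le_right _ _) (min_le_left _ _)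
  have hδ4 : δ * (a + M + 3) ≤ e * r := by
    have h4 : δ ≤ e * r / (a + M + 3) := le_trans (min_le_right _ _) (min_le_right _ _)
    rw [← le_div_iff₀ (by positivity)]
    exact h4
  refine ⟨δ, hδ0, ?_⟩
  intro g hg x' hx'
  rw [nbhd, Set.mem_iUnion₂] at hx'
  obtain ⟨x, hxA, hx'ball⟩ := hx'
  have hxx' : |(x':ℝ) - (x:ℝ)| < δ := by
    have := Metric.mem_ball.1 hx'ball
    rwa [Subtype.dist_eq, Real.dist_eq] at this
  obtain ⟨hxx'1, hxx'2⟩ := abs_lt.1 hxx'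
  obtain ⟨hx1, hx2⟩ := hxA
  have hfg : ∀ t : UI, |g t - f t| < δ := by
    intro t
    calc |g t - f t| = ‖(g - f) t‖ := by simp [Real.norm_eq_abs]
    _ ≤ ‖g - f‖ := ContinuousMap.norm_coe_le_norm _ t
    _ < δ := hg
  have hx0 : (0:ℝ) ≤ x := x.2.1
  have hxle1 : (x:ℝ) ≤ 1 := x.2.2
  have hx'0 : (0:ℝ) ≤ x' := x'.2.1
  have hx'le1 : (x':ℝ) ≤ 1 := x'.2.2
  have hfB : ∀ y : UI, (x:ℝ) - 2 ^ (-a) ≤ (y:ℝ) → (y:ℝ) ≤ (x:ℝ) →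
      a * ((y:ℝ) - (x:ℝ)) - 2 * δ ≤ f y - f x := by
    intro y h1 h2
    have h3 := hx2 y h1 h2
    have h4 := abs_lt.1 (hfg y)
    have h5 := abs_lt.1 (hfg x)
    linarith
  have hFval : ∀ t : UI, F (t:ℝ) = f t := fun t => Set.IccExtend_val zero_le_one ⇑f t
  -- Step 1: φ x ≤ a + e/2
  have hxρ_mem : (x:ℝ) - ρ ∈ Set.Icc (0:ℝ) 1 := ⟨by linarith, by linarith⟩
  have hstep1 : φ (x:ℝ) ≤ a + e / 2 := by
    have hsub : Set.Icc ((x:ℝ) - ρ) (x:ℝ) ⊆ Set.Icc 0 1 :=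
      Set.Icc_subset_Icc hxρ_mem.1 hxle1
    have hlow : (φ (x:ℝ) - e/4) * ((x:ℝ) - ((x:ℝ) - ρ)) ≤ F (x:ℝ) - F ((x:ℝ) - ρ) := by
      apply slope_ge_aux (hFc.mono hsub)
        (fun u hu => hφd u ⟨lt_of_le_of_lt hxρ_mem.1 hu.1, lt_of_lt_of_le hu.2 hxle1⟩)
        ?_ (by linarith)
      intro u hu
      have hu1 : u ∈ Set.Icc (0:ℝ) 1 := hsub (Set.mem_Icc_of_Ioo hu)
      have hd := hr u hu1 (x:ℝ) x.2 (by
        rw [Real.dist_eq, abs_lt]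
        constructor <;> [linarith [hu.1, hu.2]; linarith [hu.1, hu.2]])
      rw [Real.dist_eq] at hd
      have := abs_lt.1 hd
      linarith
    set y0 : UI := ⟨(x:ℝ) - ρ, hxρ_mem⟩ with hy0
    have hup := hfB y0 (by simp only [hy0]; linarith) (by simp only [hy0]; linarith)
    have hF1 : F ((x:ℝ) - ρ) = f y0 := hFval y0
    have hF2 : F (x:ℝ) = f x := hFval x
    have hy0v : (y0:ℝ) = (x:ℝ) - ρ := rfl
    rw [hy0v] at hup
    rw [hF1, hF2] at hlow
    nlinarith [hρ0, hδ1]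
  have hφ_near : ∀ u ∈ Set.Icc (0:ℝ) 1, |u - (x:ℝ)| < r → φ u ≤ a + e := by
    intro u hu hur
    have hd := hr u hu (x:ℝ) x.2 (by rwa [Real.dist_eq])
    rw [Real.dist_eq] at hd
    have := abs_lt.1 hd
    linarith
  -- prove x' ∈ NminusUp f b
  refine ⟨by linarith, ?_⟩
  intro y hy1 hy2
  have hy0 : (0:ℝ) ≤ y := y.2.1
  have hyle1 : (y:ℝ) ≤ 1 := y.2.2
  have hyx2a : (x:ℝ) - 2 ^ (-a) ≤ (y:ℝ) := by linarith
  by_cases hcase : (x:ℝ) - r ≤ (y:ℝ)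
  · -- slope argument on [y, x']
    have hsub : Set.Icc (y:ℝ) (x':ℝ) ⊆ Set.Icc 0 1 := Set.Icc_subset_Icc hy0 hx'le1
    have hkey : F (x':ℝ) - F (y:ℝ) ≤ (a + e) * ((x':ℝ) - (y:ℝ)) := by
      apply slope_le_aux (hFc.mono hsub)
        (fun u hu => hφd u ⟨lt_of_le_of_lt hy0 hu.1, lt_of_lt_of_le hu.2 hx'le1⟩)
        ?_ hy2
      intro u hu
      apply hφ_near u (hsub (Set.mem_Icc_of_Ioo hu))
      rw [abs_lt]
      constructor
      · linarith [hu.1]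
      · linarith [hu.2, hδ3]
    rw [hFval y, hFval x'] at hkey
    have h8 : b * ((y:ℝ) - (x':ℝ)) = -((a + e) * ((x':ℝ) - (y:ℝ))) - e * ((x':ℝ) - (y:ℝ)) := by
      rw [hb_eq]; ring
    have h9 : 0 ≤ e * ((x':ℝ) - (y:ℝ)) := mul_nonneg he.le (by linarith)
    linarith [hkey, h8, h9]
  · push_neg at hcase
    have hyx0 : (y:ℝ) ≤ (x:ℝ) := by linarith
    have h1 := hfB y hyx2a hyx0
    have hlip : |F (x:ℝ) - F (x':ℝ)| ≤ M * δ := by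
      rcases le_total (x':ℝ) (x:ℝ) with h | h
      · have := abs_sub_le_aux (hFc.mono (Set.Icc_subset_Icc hx'0 hxle1))
          (fun u hu => hφd u ⟨lt_of_le_of_lt hx'0 hu.1, lt_of_lt_of_le hu.2 hxle1⟩)
          (fun u hu => hM u (Set.Icc_subset_Icc hx'0 hxle1 (Set.mem_Icc_of_Ioo hu))) h
        calc |F (x:ℝ) - F (x':ℝ)| ≤ M * ((x:ℝ) - (x':ℝ)) := this
        _ ≤ M * δ := mul_le_mul_of_nonneg_left (by linarith) hM0
      · have := abs_sub_le_aux (hFc.mono (Set.Icc_subset_Icc hx0 hx'le1))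
          (fun u hu => hφd u ⟨lt_of_le_of_lt hx0 hu.1, lt_of_lt_of_le hu.2 hx'le1⟩)
          (fun u hu => hM u (Set.Icc_subset_Icc hx0 hx'le1 (Set.mem_Icc_of_Ioo hu))) h
        rw [abs_sub_comm]
        calc |F (x':ℝ) - F (x:ℝ)| ≤ M * ((x':ℝ) - (x:ℝ)) := this
        _ ≤ M * δ := mul_le_mul_of_nonneg_left (by linarith) hM0
    rw [hFval x, hFval x'] at hlip
    have hlip' := abs_le.1 hlip
    have hyx' : r / 2 ≤ (x':ℝ) - (y:ℝ) := by linarith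
    have her : e * r ≤ 2 * e * ((x':ℝ) - (y:ℝ)) := by
      nlinarith [mul_le_mul_of_nonneg_left hyx' he.le]
    have h7 : a * ((y:ℝ) - (x':ℝ)) - a * δ ≤ a * ((y:ℝ) - (x:ℝ)) := by
      nlinarith [mul_le_mul_of_nonneg_left hxx'1.le ha.le]
    have h8 : b * ((y:ℝ) - (x':ℝ)) = a * ((y:ℝ) - (x':ℝ)) - 2 * e * ((x':ℝ) - (y:ℝ)) := by
      rw [hb_eq]; ring
    linarith [h1, hlip'.1, hlip'.2, h7, her, hδ4, h8, hδ0]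

lemma isC1_neg (f : C(UI, ℝ)) (hf : IsC1 ⇑f) : IsC1 ⇑(-f) := by
  have hext : Set.IccExtend (zero_le_one : (0:ℝ) ≤ 1) ⇑(-f)
      = fun u => -(Set.IccExtend (zero_le_one : (0:ℝ) ≤ 1) ⇑f u) := by
    funext u
    simp [Set.IccExtend]
  unfold IsC1
  rw [hext]
  exact hf.neg

lemma NplusLow_eq (f : UI → ℝ) (a : ℝ) : NplusLow f a = NplusUp (-f) a := by
  ext x
  simp only [NplusLow, NplusUp, Set.mem_setOf_eq, Pi.neg_apply]
  constructor
  · rintro ⟨h1, h2⟩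
    exact ⟨h1, fun y hy1 hy2 => by have := h2 y hy1 hy2; linarith⟩
  · rintro ⟨h1, h2⟩
    exact ⟨h1, fun y hy1 hy2 => by have := h2 y hy1 hy2; linarith⟩

lemma NminusLow_eq (f : UI → ℝ) (a : ℝ) : NminusLow f a = NminusUp (-f) a := by
  ext x
  simp only [NminusLow, NminusUp, Set.mem_setOf_eq, Pi.neg_apply]
  constructor
  · rintro ⟨h1, h2⟩
    exact ⟨h1, fun y hy1 hy2 => by have := h2 y hy1 hy2; linarith⟩
  · rintro ⟨h1, h2⟩
    exact ⟨h1, fun y hy1 hy2 => by have := h2 y hy1 hy2; linarith⟩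

lemma nbhd_union (A B : Set UI) (r : ℝ) : nbhd (A ∪ B) r = nbhd A r ∪ nbhd B r := by
  unfold nbhd
  exact Set.biUnion_union A B _

lemma nbhd_mono (A : Set UI) {r r' : ℝ} (h : r ≤ r') : nbhd A r ⊆ nbhd A r' :=
  Set.iUnion₂_mono fun _ _ => Metric.ball_subset_ball h


/-- If `f ∈ C¹(I)` and `0 < a < b`, then there is `δ > 0` such that
`B(N̂(g,a),δ) ⊆ N̂(f,b)` and `B(Ň(g,a),δ) ⊆ Ň(f,b)` for every `g ∈ B(f,δ)`. -/
theorem nbhd_N_subset_of_C1_uniform (f : C(UI, ℝ)) (hf : IsC1 ⇑f) (a b : ℝ)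
    (ha : 0 < a) (hab : a < b) :
    ∃ δ > 0, ∀ g : C(UI, ℝ), ‖g - f‖ < δ →
      nbhd (Nhat ⇑g a) δ ⊆ Nhat ⇑f b ∧ nbhd (Ncheck ⇑g a) δ ⊆ Ncheck ⇑f b := by
  have hfneg := isC1_neg f hf
  obtain ⟨δ1, hδ1, H1⟩ := key_right f hf ha hab
  obtain ⟨δ2, hδ2, H2⟩ := key_left f hf ha hab
  obtain ⟨δ3, hδ3, H3⟩ := key_right (-f) hfneg ha hab
  obtain ⟨δ4, hδ4, H4⟩ := key_left (-f) hfneg ha hab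
  refine ⟨min (min δ1 δ2) (min δ3 δ4), by positivity, ?_⟩
  set δ := min (min δ1 δ2) (min δ3 δ4) with hδ
  have hle1 : δ ≤ δ1 := le_trans (min_le_left _ _) (min_le_left _ _)
  have hle2 : δ ≤ δ2 := le_trans (min_le_left _ _) (min_le_right _ _)
  have hle3 : δ ≤ δ3 := le_trans (min_le_right _ _) (min_le_left _ _)
  have hle4 : δ ≤ δ4 := le_trans (min_le_right _ _) (min_le_right _ _)
  intro g hg
  have hgneg : ‖(-g) - (-f)‖ < δ := by
    have : (-g) - (-f) = -(g - f) := by ring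
    rw [this, norm_neg]
    exact hg
  have hcoe_g : ⇑(-g) = -⇑g := by simp
  have hcoe_f : ⇑(-f) = -⇑f := by simp
  constructor
  · rw [Nhat, Nhat, nbhd_union]
    apply Set.union_subset_union
    · exact (nbhd_mono _ hle1).trans (H1 g (lt_of_lt_of_le hg hle1))
    · rw [NminusLow_eq, NminusLow_eq, ← hcoe_g, ← hcoe_f]
      exact (nbhd_mono _ hle4).trans (H4 (-g) (lt_of_lt_of_le hgneg hle4))
  · rw [Ncheck, Ncheck, nbhd_union]
    apply Set.union_subset_union
    · rw [NplusLow_eq, NplusLow_eq, ← hcoe_g, ← hcoe_f]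
      exact (nbhd_mono _ hle3).trans (H3 (-g) (lt_of_lt_of_le hgneg hle3))
    · exact (nbhd_mono _ hle2).trans (H2 g (lt_of_lt_of_le hg hle2))

end
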